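/- Let φ : (-1,1) → ℝ be given by φ(m) = (K/3)m³ + (J/2)m² − I(m) with K > 0, J ≥ 1, and let m₂ ∈ (0,1) be its unique positive critical point, which is the unique global maximizer of φ. Then φ''(m₂) < 0 (the maximizer is nondegenerate). -/

import Mathlib

noncomputable def Ient (m : ℝ) : ℝ :=
  ((1 - m) / 2) * Real.log ((1 - m) / 2) + ((1 + m) / 2) * Real.log ((1 + m) / 2)

noncomputable def phi (K J m : ℝ) : ℝ := K / 3 * m ^ 3 + J / 2 * m ^ 2 - Ient m

/-- The explicit first derivative of `phi K J`. -/
noncomputable def phiD (K J m : ℝ) : ℝ :=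
  K * m ^ 2 + J * m - (Real.log ((1 + m) / 2) - Real.log ((1 - m) / 2)) / 2

lemma hasDerivAt_Ient {m : ℝ} (h1 : -1 < m) (h2 : m < 1) :
    HasDerivAt Ient ((Real.log ((1 + m) / 2) - Real.log ((1 - m) / 2)) / 2) m := by
  have hp : (0 : ℝ) < (1 + m) / 2 := by linarith
  have hq : (0 : ℝ) < (1 - m) / 2 := by linarith
  have d1 : HasDerivAt (fun x : ℝ => (1 - x) / 2) (-(1 / 2)) m := by
    have := ((hasDerivAt_id m).const_sub 1).div_const 2
    norm_num at this ⊢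
    exact this
  have d2 : HasDerivAt (fun x : ℝ => (1 + x) / 2) (1 / 2) m := by
    simpa using (((hasDerivAt_id m).const_add 1).div_const 2)
  have l1 : HasDerivAt (fun x : ℝ => Real.log ((1 - x) / 2))
      (((1 - m) / 2)⁻¹ * (-(1 / 2))) m :=
    by have := (Real.hasDerivAt_log hq.ne').comp m d1; exact this
  have l2 : HasDerivAt (fun x : ℝ => Real.log ((1 + x) / 2))
      (((1 + m) / 2)⁻¹ * (1 / 2)) m :=
    by have := (Real.hasDerivAt_log hp.ne').comp m d2; exact this
  have t1 : HasDerivAt (fun x : ℝ => ((1 - x) / 2) * Real.log ((1 - x) / 2))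
      ((-(1 / 2)) * Real.log ((1 - m) / 2) + ((1 - m) / 2) * (((1 - m) / 2)⁻¹ * (-(1 / 2)))) m :=
    d1.mul l1
  have t2 : HasDerivAt (fun x : ℝ => ((1 + x) / 2) * Real.log ((1 + x) / 2))
      ((1 / 2) * Real.log ((1 + m) / 2) + ((1 + m) / 2) * (((1 + m) / 2)⁻¹ * (1 / 2))) m :=
    d2.mul l2
  have := t1.add t2
  have e1 : (1 : ℝ) + m ≠ 0 := by linarith
  have e2 : (1 : ℝ) - m ≠ 0 := by linarith
  refine this.congr_deriv ?_
  field_simp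
  ring

lemma hasDerivAt_phi (K J : ℝ) {m : ℝ} (h1 : -1 < m) (h2 : m < 1) :
    HasDerivAt (phi K J) (phiD K J m) m := by
  have hpoly : HasDerivAt (fun x : ℝ => K / 3 * x ^ 3 + J / 2 * x ^ 2)
      (K * m ^ 2 + J * m) m := by
    have h3 : HasDerivAt (fun x : ℝ => x ^ 3) (3 * m ^ 2) m := by
      simpa using hasDerivAt_pow 3 m
    have h2' : HasDerivAt (fun x : ℝ => x ^ 2) (2 * m) m := by
      simpa using hasDerivAt_pow 2 m
    have := (h3.const_mul (K / 3)).add (h2'.const_mul (J / 2))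
    refine this.congr_deriv ?_
    ring
  exact hpoly.sub (hasDerivAt_Ient h1 h2)

lemma deriv_phi_eq (K J : ℝ) {m : ℝ} (h1 : -1 < m) (h2 : m < 1) :
    deriv (phi K J) m = phiD K J m :=
  (hasDerivAt_phi K J h1 h2).deriv

lemma hasDerivAt_phiD (K J : ℝ) {m : ℝ} (h1 : -1 < m) (h2 : m < 1) :
    HasDerivAt (phiD K J) (2 * K * m + J - 1 / (1 - m ^ 2)) m := by
  have hp : (0 : ℝ) < (1 + m) / 2 := by linarith
  have hq : (0 : ℝ) < (1 - m) / 2 := by linarith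
  have d1 : HasDerivAt (fun x : ℝ => (1 - x) / 2) (-(1 / 2)) m := by
    have := ((hasDerivAt_id m).const_sub 1).div_const 2
    norm_num at this ⊢
    exact this
  have d2 : HasDerivAt (fun x : ℝ => (1 + x) / 2) (1 / 2) m := by
    simpa using (((hasDerivAt_id m).const_add 1).div_const 2)
  have l1 : HasDerivAt (fun x : ℝ => Real.log ((1 - x) / 2))
      (((1 - m) / 2)⁻¹ * (-(1 / 2))) m :=
    by have := (Real.hasDerivAt_log hq.ne').comp m d1; exact this
  have l2 : HasDerivAt (fun x : ℝ => Real.log ((1 + x) / 2))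
      (((1 + m) / 2)⁻¹ * (1 / 2)) m :=
    by have := (Real.hasDerivAt_log hp.ne').comp m d2; exact this
  have h2' : HasDerivAt (fun x : ℝ => x ^ 2) (2 * m) m := by
    simpa using hasDerivAt_pow 2 m
  have hpoly : HasDerivAt (fun x : ℝ => K * x ^ 2 + J * x) (K * (2 * m) + J) m := by
    exact ((h2'.const_mul K).add ((hasDerivAt_id m).const_mul J)).congr_deriv (by ring)
  have := hpoly.sub ((l2.sub l1).div_const 2)
  refine this.congr_deriv ?_
  have e1 : (1 : ℝ) + m ≠ 0 := by linarith
  have e2 : (1 : ℝ) - m ≠ 0 := by linarith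
  have e3 : (1 : ℝ) - m ^ 2 ≠ 0 := by nlinarith
  field_simp
  ring

lemma key_ineq (K J m₂ : ℝ) (hK : 0 < K) (hJ : 1 ≤ J)
    (hm : m₂ ∈ Set.Ioo (0 : ℝ) 1) (hcrit : phiD K J m₂ = 0) :
    2 * K * m₂ + J - 1 / (1 - m₂ ^ 2) < 0 := by
  obtain ⟨hm0, hm1⟩ := hm
  by_contra hcon
  push_neg at hcon
  -- phiD is strictly increasing on [0, m₂]
  have hpos : ∀ t ∈ Set.Ioo (0 : ℝ) m₂, 0 < 2 * K * t + J - 1 / (1 - t ^ 2) := by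
    intro t ⟨ht0, htm⟩
    have ht1 : t < 1 := htm.trans hm1
    have hd1 : (0 : ℝ) < 1 - t ^ 2 := by nlinarith
    have hd2 : (0 : ℝ) < 1 - m₂ ^ 2 := by nlinarith
    -- t/(1-t²) < m₂/(1-m₂²)
    have hmono : t / (1 - t ^ 2) < m₂ / (1 - m₂ ^ 2) := by
      rw [div_lt_div_iff₀ hd1 hd2]
      nlinarith [mul_pos (sub_pos.2 htm) (mul_pos ht0 hm0), sub_pos.2 htm]
    -- from hcon: m₂²/(1-m₂²) ≤ 2K m₂ + (J-1)
    have hc2 : m₂ ^ 2 / (1 - m₂ ^ 2) ≤ 2 * K * m₂ + (J - 1) := by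
      have : 1 / (1 - m₂ ^ 2) ≤ 2 * K * m₂ + J := by linarith
      rw [div_le_iff₀ hd2]
      rw [div_le_iff₀ hd2] at this
      nlinarith
    have ht2 : t ^ 2 / (1 - t ^ 2) < t / m₂ * (m₂ ^ 2 / (1 - m₂ ^ 2)) := by
      have : t * (t / (1 - t ^ 2)) < t * (m₂ / (1 - m₂ ^ 2)) :=
        (mul_lt_mul_iff_right₀ ht0).2 hmono
      calc t ^ 2 / (1 - t ^ 2) = t * (t / (1 - t ^ 2)) := by ring
        _ < t * (m₂ / (1 - m₂ ^ 2)) := this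
        _ = t / m₂ * (m₂ ^ 2 / (1 - m₂ ^ 2)) := by
            field_simp
    have htm' : t / m₂ < 1 := (div_lt_one hm0).2 htm
    have htm'' : 0 < t / m₂ := div_pos ht0 hm0
    have h1 : 1 / (1 - t ^ 2) = 1 + t ^ 2 / (1 - t ^ 2) := by field_simp; ring
    have hq : t / m₂ * (m₂ ^ 2 / (1 - m₂ ^ 2)) ≤ t / m₂ * (2 * K * m₂ + (J - 1)) := by
      apply mul_le_mul_of_nonneg_left hc2 htm''.le
    have hrw : t / m₂ * (2 * K * m₂) = 2 * K * t := by field_simp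
    nlinarith [mul_le_mul_of_nonneg_right htm'.le (by linarith : (0:ℝ) ≤ J - 1)]
  have hmono : StrictMonoOn (phiD K J) (Set.Icc 0 m₂) := by
    apply strictMonoOn_of_deriv_pos (convex_Icc 0 m₂)
    · intro x hx
      obtain ⟨hx0, hxm⟩ := hx
      exact (hasDerivAt_phiD K J (by linarith) (by linarith [hxm.trans_lt hm1])).continuousAt.continuousWithinAt
    · intro x hx
      rw [interior_Icc] at hx
      rw [(hasDerivAt_phiD K J (by linarith [hx.1]) (by linarith [hx.2.trans hm1])).deriv]
      exact hpos x hx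
  have h0 : phiD K J 0 = 0 := by simp [phiD]
  have : phiD K J 0 < phiD K J m₂ :=
    hmono ⟨le_refl 0, hm0.le⟩ ⟨hm0.le, le_refl m₂⟩ hm0
  rw [h0, hcrit] at this
  exact lt_irrefl 0 this

theorem nondegenerate_maximizer (K J m₂ : ℝ) (hK : 0 < K) (hJ : 1 ≤ J)
    (hm : m₂ ∈ Set.Ioo (0 : ℝ) 1)
    (hcrit : deriv (phi K J) m₂ = 0)
    (huniq : ∀ m ∈ Set.Ioo (0 : ℝ) 1, deriv (phi K J) m = 0 → m = m₂)
    (hmax : IsMaxOn (phi K J) (Set.Icc (-1 : ℝ) 1) m₂) :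
    deriv (deriv (phi K J)) m₂ < 0 := by
  obtain ⟨hm0, hm1⟩ := hm
  have heq : deriv (deriv (phi K J)) m₂ = 2 * K * m₂ + J - 1 / (1 - m₂ ^ 2) := by
    have hev : (fun m => deriv (phi K J) m) =ᶠ[nhds m₂] (fun m => phiD K J m) := by
      filter_upwards [Ioo_mem_nhds (by linarith : (-1:ℝ) < m₂) hm1] with x hx
      exact deriv_phi_eq K J hx.1 hx.2
    rw [hev.deriv_eq]
    exact (hasDerivAt_phiD K J (by linarith) hm1).deriv
  rw [heq]
  have hcrit' : phiD K J m₂ = 0 := by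
    rw [← deriv_phi_eq K J (by linarith) hm1]; exact hcrit
  exact key_ineq K J m₂ hK hJ ⟨hm0, hm1⟩ hcrit'
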